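/- For Laurent monomials ŵ^p_{m,a} = (μ⁰)^{p+m-1}(μ¹)^{p-m-1} λ₀^{a+2-p} λ₁^{2-p-a} and the Poincaré-patch bracket {f,g}^P = ∂_{λ₀}f ∂_{μ⁰'}g + ∂_{λ₁}f ∂_{μ¹'}g − ∂_{μ⁰'}f ∂_{λ₀}g − ∂_{μ¹'}f ∂_{λ₁}g (where μ^{α'} are images of μ^{α̇} under a fixed isomorphism), the bracket of two generators is a linear combination of two generators ŵ^{p+q-3/2}_{m+n∓1/2, a+b∓1/2} with the structure constants ((p+m-1)(q-b-2)-(q+n-1)(p-a-2)) and ((p-m-1)(q+b-2)-(q-n-1)(p+a-2)) respectively. -/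
import Mathlib


/-- The Poincaré-patch bracket
`{f,g}^P = ∂_{λ₀}f ∂_{μ⁰'}g + ∂_{λ₁}f ∂_{μ¹'}g − ∂_{μ⁰'}f ∂_{λ₀}g − ∂_{μ¹'}f ∂_{λ₁}g`
in the variables `(x, y, s, t) = (μ⁰', μ¹', λ₀, λ₁)`. -/
noncomputable def pbP (f g : ℂ → ℂ → ℂ → ℂ → ℂ) : ℂ → ℂ → ℂ → ℂ → ℂ :=
  fun x y s t =>
    deriv (fun u => f x y u t) s * deriv (fun u => g u y s t) x
    + deriv (fun u => f x y s u) t * deriv (fun u => g x u s t) y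
    - deriv (fun u => f u y s t) x * deriv (fun u => g x y u t) s
    - deriv (fun u => f x u s t) y * deriv (fun u => g x y s u) t

/-- The Laurent monomial `(μ⁰)^i (μ¹)^j λ₀^k λ₁^l`. -/
noncomputable def mon (i j k l : ℤ) : ℂ → ℂ → ℂ → ℂ → ℂ :=
  fun x y s t => x ^ i * y ^ j * s ^ k * t ^ l

lemma aux_deriv (c : ℂ) (nn : ℤ) (u : ℂ) (hu : u ≠ 0) :
    deriv (fun v => c * v ^ nn) u = c * ((nn : ℂ) * u ^ (nn - 1)) := by
  rw [deriv_const_mul _ (differentiableAt_zpow.mpr (Or.inl hu)), deriv_zpow]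

/-- For `ŵ^p_{m,a} = (μ⁰)^{p+m-1}(μ¹)^{p-m-1} λ₀^{a+2-p} λ₁^{2-p-a}` the
Poincaré-patch bracket of two generators is the stated combination of the two
generators `ŵ^{p+q-3/2}_{m+n∓1/2, a+b∓1/2}`. -/
theorem poincare_bracket_of_generators (p m a q n b : ℚ)
    (k₁ k₂ e₁ e₂ l₁ l₂ g₁ g₂ : ℤ)
    (hk₁ : 0 ≤ k₁) (hk₂ : 0 ≤ k₂) (hl₁ : 0 ≤ l₁) (hl₂ : 0 ≤ l₂)
    (h₁ : (k₁ : ℚ) = p + m - 1) (h₂ : (k₂ : ℚ) = p - m - 1)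
    (h₃ : (e₁ : ℚ) = a + 2 - p) (h₄ : (e₂ : ℚ) = 2 - p - a)
    (h₅ : (l₁ : ℚ) = q + n - 1) (h₆ : (l₂ : ℚ) = q - n - 1)
    (h₇ : (g₁ : ℚ) = b + 2 - q) (h₈ : (g₂ : ℚ) = 2 - q - b)
    (x y s t : ℂ) (hx : x ≠ 0) (hy : y ≠ 0) (hs : s ≠ 0) (ht : t ≠ 0) :
    pbP (mon k₁ k₂ e₁ e₂) (mon l₁ l₂ g₁ g₂) x y s t
      = (((p + m - 1) * (q - b - 2) - (q + n - 1) * (p - a - 2) : ℚ) : ℂ) *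
          mon (k₁ + l₁ - 1) (k₂ + l₂) (e₁ + g₁ - 1) (e₂ + g₂) x y s t
        + (((p - m - 1) * (q + b - 2) - (q - n - 1) * (p + a - 2) : ℚ) : ℂ) *
          mon (k₁ + l₁) (k₂ + l₂ - 1) (e₁ + g₁) (e₂ + g₂ - 1) x y s t := by
  have c1 : ((p + m - 1) * (q - b - 2) - (q + n - 1) * (p - a - 2) : ℚ)
      = (e₁ : ℚ) * l₁ - k₁ * g₁ := by rw [h₁, h₃, h₅, h₇]; ring
  have c2 : ((p - m - 1) * (q + b - 2) - (q - n - 1) * (p + a - 2) : ℚ)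
      = (e₂ : ℚ) * l₂ - k₂ * g₂ := by rw [h₂, h₄, h₆, h₈]; ring
  rw [c1, c2]
  push_cast
  simp only [pbP, mon]
  rw [show (fun u => x ^ k₁ * y ^ k₂ * u ^ e₁ * t ^ e₂)
        = fun u => (x ^ k₁ * y ^ k₂ * t ^ e₂) * u ^ e₁ from funext fun u => by ring,
      show (fun u => u ^ l₁ * y ^ l₂ * s ^ g₁ * t ^ g₂)
        = fun u => (y ^ l₂ * s ^ g₁ * t ^ g₂) * u ^ l₁ from funext fun u => by ring,
      show (fun u => x ^ k₁ * y ^ k₂ * s ^ e₁ * u ^ e₂)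
        = fun u => (x ^ k₁ * y ^ k₂ * s ^ e₁) * u ^ e₂ from funext fun u => by ring,
      show (fun u => x ^ l₁ * u ^ l₂ * s ^ g₁ * t ^ g₂)
        = fun u => (x ^ l₁ * s ^ g₁ * t ^ g₂) * u ^ l₂ from funext fun u => by ring,
      show (fun u => u ^ k₁ * y ^ k₂ * s ^ e₁ * t ^ e₂)
        = fun u => (y ^ k₂ * s ^ e₁ * t ^ e₂) * u ^ k₁ from funext fun u => by ring,
      show (fun u => x ^ l₁ * y ^ l₂ * u ^ g₁ * t ^ g₂)
        = fun u => (x ^ l₁ * y ^ l₂ * t ^ g₂) * u ^ g₁ from funext fun u => by ring,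
      show (fun u => x ^ k₁ * u ^ k₂ * s ^ e₁ * t ^ e₂)
        = fun u => (x ^ k₁ * s ^ e₁ * t ^ e₂) * u ^ k₂ from funext fun u => by ring,
      show (fun u => x ^ l₁ * y ^ l₂ * s ^ g₁ * u ^ g₂)
        = fun u => (x ^ l₁ * y ^ l₂ * s ^ g₁) * u ^ g₂ from funext fun u => by ring,
      aux_deriv _ e₁ s hs, aux_deriv _ l₁ x hx, aux_deriv _ e₂ t ht,
      aux_deriv _ l₂ y hy, aux_deriv _ k₁ x hx, aux_deriv _ g₁ s hs,
      aux_deriv _ k₂ y hy, aux_deriv _ g₂ t ht]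
  simp only [zpow_sub_one₀ hx, zpow_sub_one₀ hy, zpow_sub_one₀ hs, zpow_sub_one₀ ht,
    zpow_add₀ hx, zpow_add₀ hy, zpow_add₀ hs, zpow_add₀ ht]
  ring
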